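/- For an integer k, there exists a 3×2 integer matrix P with Pᵀ P = k·I₂ if and only if k is expressible as a sum of two squares of integers, i.e., there exist integers m, n with k = m² + n². (This is the algebraic content of: there is a degree k map f: (ℂP²)^{♯3} → ℂP²♯ℂP² if and only if k ≥ 0 and every prime of the form 4p-1 dividing k occurs to an even power in the prime factorization of k.) -/

import Mathlib

open Matrix

private lemma four_sq_down (k C D : ℤ) (h : 4 * k = C ^ 2 + D ^ 2) :
    ∃ m n : ℤ, k = m ^ 2 + n ^ 2 := by
  rcases Int.even_or_odd C with ⟨c, rfl⟩ | ⟨c, rfl⟩ <;>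
    rcases Int.even_or_odd D with ⟨d, rfl⟩ | ⟨d, rfl⟩
  · refine ⟨c, d, ?_⟩
    have h' : 4 * k = 4 * (c ^ 2 + d ^ 2) := by linear_combination h
    linarith
  · exfalso
    have h' : 4 * (k - (c ^ 2 + d ^ 2 + d)) = 1 := by linear_combination h
    omega
  · exfalso
    have h' : 4 * (k - (c ^ 2 + c + d ^ 2)) = 1 := by linear_combination h
    omega
  · exfalso
    have h' : 2 * (2 * k - 2 * (c ^ 2 + c + d ^ 2 + d) - 1) = 0 := by linear_combination h
    omega

private lemma gauss_key (z₀ z₁ z₂ : ℤ√(-1)) (h : z₀ ^ 2 + z₁ ^ 2 + z₂ ^ 2 = 0) :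
    ∃ C D : ℤ, 2 * (z₀.norm + z₁.norm + z₂.norm) = C ^ 2 + D ^ 2 := by
  have hI : (⟨0, 1⟩ : ℤ√(-1)) ^ 2 = -1 := by
    ext <;> simp [pow_two, Zsqrtd.re_mul, Zsqrtd.im_mul]
  set I : ℤ√(-1) := ⟨0, 1⟩ with hIdef
  have hxy : (z₀ + I * z₁) * (z₀ - I * z₁) = -(z₂ ^ 2) := by
    linear_combination h - z₁ ^ 2 * hI
  have hpar : (z₀ + I * z₁).norm + (z₀ - I * z₁).norm = 2 * z₀.norm + 2 * z₁.norm := by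
    simp only [Zsqrtd.norm_def, Zsqrtd.re_add, Zsqrtd.im_add, Zsqrtd.re_sub, Zsqrtd.im_sub,
      Zsqrtd.re_mul, Zsqrtd.im_mul, hIdef]
    ring
  by_cases hx : z₀ + I * z₁ = 0
  · have hz2 : z₂ = 0 := by
      have h2 : z₂ ^ 2 = 0 := by
        rw [hx, zero_mul] at hxy
        linear_combination hxy
      exact pow_eq_zero_iff two_ne_zero |>.mp h2
    have hz0 : z₀ = -(I * z₁) := eq_neg_of_add_eq_zero_left hx
    refine ⟨2 * z₁.re, 2 * z₁.im, ?_⟩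
    rw [hz0, hz2]
    simp only [Zsqrtd.norm_def, Zsqrtd.re_neg, Zsqrtd.im_neg, Zsqrtd.re_mul, Zsqrtd.im_mul,
      Zsqrtd.re_zero, Zsqrtd.im_zero, hIdef]
    ring
  by_cases hy : z₀ - I * z₁ = 0
  · have hz2 : z₂ = 0 := by
      have h2 : z₂ ^ 2 = 0 := by
        rw [hy, mul_zero] at hxy
        linear_combination hxy
      exact pow_eq_zero_iff two_ne_zero |>.mp h2
    have hz0 : z₀ = I * z₁ := by linear_combination hy
    refine ⟨2 * z₁.re, 2 * z₁.im, ?_⟩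
    rw [hz0, hz2]
    simp only [Zsqrtd.norm_def, Zsqrtd.re_mul, Zsqrtd.im_mul,
      Zsqrtd.re_zero, Zsqrtd.im_zero, hIdef]
    ring
  -- main case
  set x := z₀ + I * z₁ with hxdef
  set y := z₀ - I * z₁ with hydef
  set g := EuclideanDomain.gcd x y with hgdef
  have hg : g ≠ 0 := fun h0 => hx (EuclideanDomain.gcd_eq_zero_iff.mp h0).1
  obtain ⟨α, hα⟩ : g ∣ x := EuclideanDomain.gcd_dvd_left x y
  obtain ⟨β, hβ⟩ : g ∣ y := EuclideanDomain.gcd_dvd_right x y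
  have hcop : IsCoprime α β := by
    have hbez := EuclideanDomain.gcd_eq_gcd_ab x y
    refine ⟨EuclideanDomain.gcdA x y, EuclideanDomain.gcdB x y, ?_⟩
    apply mul_left_cancel₀ hg
    rw [mul_one]
    linear_combination -hbez - EuclideanDomain.gcdA x y * hα - EuclideanDomain.gcdB x y * hβ
  have hz2sq : z₂ ^ 2 = -(x * y) := by linear_combination hxy
  have hdvd : g ∣ z₂ := by
    refine (IsIntegrallyClosed.pow_dvd_pow_iff two_ne_zero).mp ⟨-(α * β), ?_⟩
    rw [hz2sq, hα, hβ]; ring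
  obtain ⟨w, hw⟩ := hdvd
  have hab : α * β = (I * w) ^ 2 := by
    apply mul_left_cancel₀ (pow_ne_zero 2 hg)
    have hIw : (I * w) ^ 2 = -(w ^ 2) := by linear_combination w ^ 2 * hI
    rw [hw] at hz2sq
    calc g ^ 2 * (α * β) = x * y := by rw [hα, hβ]; ring
      _ = -((g * w) ^ 2) := by linear_combination hz2sq
      _ = g ^ 2 * (I * w) ^ 2 := by rw [hIw]; ring
  obtain ⟨s, u, hu⟩ := exists_associated_pow_of_mul_eq_pow' hcop hab
  obtain ⟨t, v, hv⟩ := exists_associated_pow_of_mul_eq_pow' hcop.symm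
      (by rw [mul_comm] at hab; exact hab)
  have hneg : (-1 : ℤ) ≤ 0 := by norm_num
  have hNu : (u : ℤ√(-1)).norm = 1 := (Zsqrtd.norm_eq_one_iff' hneg _).mpr u.isUnit
  have hNv : (v : ℤ√(-1)).norm = 1 := (Zsqrtd.norm_eq_one_iff' hneg _).mpr v.isUnit
  have e5 : α.norm = s.norm ^ 2 := by
    rw [← hu, Zsqrtd.norm_mul, hNu, mul_one, pow_two, pow_two, Zsqrtd.norm_mul]
  have e6 : β.norm = t.norm ^ 2 := by
    rw [← hv, Zsqrtd.norm_mul, hNv, mul_one, pow_two, pow_two, Zsqrtd.norm_mul]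
  have hNI : I.norm = 1 := by simp [Zsqrtd.norm_def, hIdef]
  have e7 : w.norm = s.norm * t.norm := by
    have hh : α.norm * β.norm = (I.norm * w.norm) ^ 2 := by
      calc α.norm * β.norm = (α * β).norm := (Zsqrtd.norm_mul _ _).symm
        _ = ((I * w) ^ 2).norm := by rw [hab]
        _ = (I.norm * w.norm) ^ 2 := by
            rw [pow_two, pow_two, Zsqrtd.norm_mul, Zsqrtd.norm_mul]
    rw [hNI, one_mul, e5, e6] at hh
    have hw0 : 0 ≤ w.norm := Zsqrtd.norm_nonneg hneg w
    have hst : 0 ≤ s.norm * t.norm :=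
      mul_nonneg (Zsqrtd.norm_nonneg hneg s) (Zsqrtd.norm_nonneg hneg t)
    nlinarith [hh, hw0, hst, sq_nonneg (w.norm - s.norm * t.norm),
      sq_nonneg (w.norm + s.norm * t.norm)]
  have e2 : x.norm = g.norm * α.norm := by rw [hα, Zsqrtd.norm_mul]
  have e3 : y.norm = g.norm * β.norm := by rw [hβ, Zsqrtd.norm_mul]
  have e4 : z₂.norm = g.norm * w.norm := by rw [hw, Zsqrtd.norm_mul]
  have e8 : g.norm = g.re ^ 2 + g.im ^ 2 := by rw [Zsqrtd.norm_def]; ring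
  refine ⟨g.re * (s.norm + t.norm), g.im * (s.norm + t.norm), ?_⟩
  have hgoal : 2 * (z₀.norm + z₁.norm + z₂.norm) = (x.norm + y.norm) + 2 * z₂.norm := by
    linarith [hpar]
  rw [hgoal, e2, e3, e4, e5, e6, e7, e8]
  ring

theorem degree_cp2_three_to_two (k : ℤ) :
    (∃ P : Matrix (Fin 3) (Fin 2) ℤ, Pᵀ * P = k • (1 : Matrix (Fin 2) (Fin 2) ℤ)) ↔
      ∃ m n : ℤ, k = m ^ 2 + n ^ 2 := by
  constructor
  · rintro ⟨P, hP⟩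
    have h00 := congrFun (congrFun hP 0) 0
    have h01 := congrFun (congrFun hP 0) 1
    have h11 := congrFun (congrFun hP 1) 1
    simp [Matrix.mul_apply, Matrix.transpose_apply, Fin.sum_univ_three,
      Matrix.smul_apply, Matrix.one_apply] at h00 h01 h11
    set z : Fin 3 → ℤ√(-1) := fun i => ⟨P i 0, P i 1⟩ with hz
    have hsq : z 0 ^ 2 + z 1 ^ 2 + z 2 ^ 2 = 0 := by
      ext
      · simp only [Zsqrtd.re_add, Zsqrtd.re_zero, pow_two, Zsqrtd.re_mul, Zsqrtd.im_mul, hz]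
        linarith [h00, h11]
      · simp only [Zsqrtd.im_add, Zsqrtd.im_zero, pow_two, Zsqrtd.re_mul, Zsqrtd.im_mul, hz]
        linarith [h01]
    have hN : (z 0).norm + (z 1).norm + (z 2).norm = 2 * k := by
      simp only [Zsqrtd.norm_def, hz]
      linarith [h00, h11]
    obtain ⟨C, D, hCD⟩ := gauss_key (z 0) (z 1) (z 2) hsq
    rw [hN] at hCD
    exact four_sq_down k C D (by linarith [hCD])
  · rintro ⟨m, n, rfl⟩
    refine ⟨!![m, -n; n, m; 0, 0], ?_⟩
    ext i j
    fin_cases i <;> fin_cases j <;>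
      simp [Matrix.mul_apply, Matrix.transpose_apply, Fin.sum_univ_three, Matrix.one_apply,
        Matrix.vecHead, Matrix.vecTail] <;> ring
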